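/- For an integer ℓ ≥ 2 let g_ℓ(u) := √3·u^ℓ / √((u+2)(6−5u)³) (defined for real u near 1) and set ξ_ℓ := (1/(12^ℓ·(ℓ−1)!)) · g_ℓ^{(ℓ−1)}(1), where g_ℓ^{(ℓ−1)} denotes the (ℓ−1)-st derivative. Then ξ_ℓ is a rational number and ξ_ℓ ≥ 12^{−ℓ}; in particular ξ_ℓ > 0. -/

import Mathlib

open Real Nat

/-- The function `g_ℓ(u) = √3·u^ℓ/√((u+2)(6−5u)³)`. -/
noncomputable def g (ℓ : ℕ) (u : ℝ) : ℝ :=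
  Real.sqrt 3 * u ^ ℓ / Real.sqrt ((u + 2) * (6 - 5 * u) ^ 3)

/-- `ξ_ℓ`, the limiting probability that the root face of a random rooted planar map
is a pure `ℓ`-gon. -/
noncomputable def xi (ℓ : ℕ) : ℝ :=
  1 / ((12 : ℝ) ^ ℓ * ((ℓ - 1)! : ℝ)) * iteratedDeriv (ℓ - 1) (g ℓ) 1

namespace XiAux

noncomputable def A : ℕ → ℝ
  | 0 => 1
  | (i+1) => A i * (i + 1/2)

noncomputable def B : ℕ → ℝ
  | 0 => 1
  | (k+1) => B k * (k + 3/2)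

noncomputable def P (i : ℕ) (x : ℝ) : ℝ := (-1)^i * A i * (x+2) ^ (-(1/2) - i : ℝ)

noncomputable def Q (k : ℕ) (x : ℝ) : ℝ :=
  Real.sqrt 3 * 5^k * B k * (6-5*x) ^ (-(3/2) - k : ℝ)

noncomputable def H (j : ℕ) (x : ℝ) : ℝ :=
  ∑ i ∈ Finset.range (j+1), (j.choose i : ℝ) * (P i x * Q (j-i) x)

noncomputable def M (ℓ n : ℕ) (x : ℝ) : ℝ := (ℓ.descFactorial n : ℝ) * x ^ (ℓ - n)

def s : Set ℝ := Set.Ioo (-2 : ℝ) (6/5)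

lemma hs : IsOpen s := isOpen_Ioo

lemma hP (i : ℕ) {x : ℝ} (hx : x ∈ s) : HasDerivAt (P i) (P (i+1) x) x := by
  have hx0 : (0:ℝ) < x + 2 := by simp only [s, Set.mem_Ioo] at hx; linarith [hx.1]
  have h1 : HasDerivAt (fun y : ℝ => y + 2) 1 x := (hasDerivAt_id x).add_const 2
  have h2 : HasDerivAt (fun y : ℝ => (y + 2) ^ (-(1/2) - i : ℝ))
      ((-(1/2) - i) * (x + 2) ^ (-(1/2) - i - 1 : ℝ) * 1) x := by
    exact (Real.hasDerivAt_rpow_const (Or.inl hx0.ne')).comp x h1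
  have h3 := h2.const_mul ((-1:ℝ)^i * A i)
  have hval : (-1:ℝ)^i * A i * ((-(1/2) - (i:ℝ)) * (x + 2) ^ (-(1/2) - (i:ℝ) - 1 : ℝ) * 1)
      = P (i+1) x := by
    simp only [P, A]
    rw [show (-(1/2) - ((i+1:ℕ):ℝ) : ℝ) = -(1/2) - (i:ℝ) - 1 by push_cast; ring]
    ring
  rw [hval] at h3
  exact h3

lemma hQ (k : ℕ) {x : ℝ} (hx : x ∈ s) : HasDerivAt (Q k) (Q (k+1) x) x := by
  have hx0 : (0:ℝ) < 6 - 5*x := by simp only [s, Set.mem_Ioo] at hx; linarith [hx.2]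
  have h1 : HasDerivAt (fun y : ℝ => 6 - 5*y) (-5) x := by
    simpa using ((hasDerivAt_id x).const_mul (5:ℝ)).const_sub 6
  have h2 : HasDerivAt (fun y : ℝ => (6 - 5*y) ^ (-(3/2) - k : ℝ))
      ((-(3/2) - k) * (6 - 5*x) ^ (-(3/2) - k - 1 : ℝ) * (-5)) x := by
    exact (Real.hasDerivAt_rpow_const (Or.inl hx0.ne')).comp x h1
  have h3 := h2.const_mul (Real.sqrt 3 * 5^k * B k)
  have hval : Real.sqrt 3 * 5^k * B k
        * ((-(3/2) - (k:ℝ)) * (6 - 5*x) ^ (-(3/2) - (k:ℝ) - 1 : ℝ) * (-5))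
      = Q (k+1) x := by
    simp only [Q, B]
    rw [show (-(3/2) - ((k+1:ℕ):ℝ) : ℝ) = -(3/2) - (k:ℝ) - 1 by push_cast; ring]
    ring
  rw [hval] at h3
  exact h3

lemma hM (ℓ n : ℕ) (x : ℝ) : HasDerivAt (M ℓ n) (M ℓ (n+1) x) x := by
  have h : HasDerivAt (M ℓ n) _ x := (hasDerivAt_pow (ℓ - n) x).const_mul ((ℓ.descFactorial n : ℝ))
  convert h using 1
  show M ℓ (n+1) x = _
  simp only [M, Nat.descFactorial_succ]
  rcases le_or_gt ℓ n with h'|h'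
  · have e1 : ℓ - n = 0 := by omega
    have e2 : ℓ - (n+1) = 0 := by omega
    simp [e1, e2]
  · have e1 : ℓ - (n+1) = (ℓ - n) - 1 := by omega
    rw [e1]
    push_cast [Nat.cast_sub (by omega : n ≤ ℓ)]
    ring

lemma pascal_sum (a b : ℕ → ℝ) (n : ℕ) :
    ∑ i ∈ Finset.range (n+1), (n.choose i : ℝ) * (a (i+1) * b (n-i) + a i * b (n-i+1))
      = ∑ i ∈ Finset.range (n+2), ((n+1).choose i : ℝ) * (a i * b (n+1-i)) := by
  rw [Finset.sum_range_succ' (fun i => (((n+1).choose i : ℕ) : ℝ) * (a i * b (n+1-i))) (n+1)]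
  have e1 : ∑ i ∈ Finset.range (n+1), (((n+1).choose (i+1) : ℕ) : ℝ) * (a (i+1) * b (n+1-(i+1)))
      = ∑ i ∈ Finset.range (n+1),
          ((n.choose i : ℝ) * (a (i+1) * b (n-i)) + (n.choose (i+1) : ℝ) * (a (i+1) * b (n-i))) := by
    refine Finset.sum_congr rfl fun i hi => ?_
    rw [Nat.choose_succ_succ, Nat.succ_sub_succ n i]
    push_cast
    ring
  rw [e1, Finset.sum_add_distrib]
  have e2 : ∑ i ∈ Finset.range (n+1), (n.choose i : ℝ) * (a i * b (n-i+1))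
      = ∑ i ∈ Finset.range (n+1), (n.choose (i+1) : ℝ) * (a (i+1) * b (n-i))
        + (((n+1).choose 0 : ℕ) : ℝ) * (a 0 * b (n+1-0)) := by
    rw [Finset.sum_range_succ' (fun i => (n.choose i : ℝ) * (a i * b (n-i+1))) n,
      Finset.sum_range_succ (fun i => (n.choose (i+1) : ℝ) * (a (i+1) * b (n-i))) n]
    simp only [Nat.choose_succ_self, Nat.cast_zero, zero_mul, add_zero, Nat.choose_zero_right,
      Nat.cast_one, one_mul, Nat.sub_zero]
    congr 1
    refine Finset.sum_congr rfl fun i hi => ?_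
    have hi' : i < n := Finset.mem_range.mp hi
    rw [show n - (i+1) + 1 = n - i by omega]
  have e3 : ∑ i ∈ Finset.range (n+1), (n.choose i : ℝ) * (a (i+1) * b (n-i) + a i * b (n-i+1))
      = ∑ i ∈ Finset.range (n+1), (n.choose i : ℝ) * (a (i+1) * b (n-i))
        + ∑ i ∈ Finset.range (n+1), (n.choose i : ℝ) * (a i * b (n-i+1)) := by
    rw [← Finset.sum_add_distrib]
    refine Finset.sum_congr rfl fun i hi => by ring
  rw [e3, e2]
  ring

lemma hH (j : ℕ) {x : ℝ} (hx : x ∈ s) : HasDerivAt (H j) (H (j+1) x) x := by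
  have hsum : HasDerivAt (fun y => ∑ i ∈ Finset.range (j+1), (j.choose i : ℝ) * (P i y * Q (j-i) y))
      (∑ i ∈ Finset.range (j+1), (j.choose i : ℝ)
        * (P (i+1) x * Q (j-i) x + P i x * Q (j-i+1) x)) x := by
    apply HasDerivAt.fun_sum
    intro i hi
    exact ((hP i hx).mul (hQ (j-i) hx)).const_mul _
  have hval : ∑ i ∈ Finset.range (j+1), (j.choose i : ℝ)
        * (P (i+1) x * Q (j-i) x + P i x * Q (j-i+1) x) = H (j+1) x := by
    rw [H, ← pascal_sum (fun i => P i x) (fun k => Q k x) j]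
  rw [hval] at hsum
  exact hsum

lemma leibniz (F G : ℕ → ℝ → ℝ)
    (hF : ∀ n, ∀ x ∈ s, HasDerivAt (F n) (F (n+1) x) x)
    (hG : ∀ n, ∀ x ∈ s, HasDerivAt (G n) (G (n+1) x) x) :
    ∀ n, ∀ x ∈ s, iteratedDeriv n (fun y => F 0 y * G 0 y) x
      = ∑ i ∈ Finset.range (n+1), (n.choose i : ℝ) * (F i x * G (n-i) x) := by
  intro n
  induction n with
  | zero => intro x hx; simp
  | succ n ih =>
    intro x hx
    rw [iteratedDeriv_succ]
    have hev : iteratedDeriv n (fun y => F 0 y * G 0 y) =ᶠ[nhds x]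
        fun y => ∑ i ∈ Finset.range (n+1), (n.choose i : ℝ) * (F i y * G (n-i) y) :=
      Filter.eventuallyEq_of_mem (hs.mem_nhds hx) (fun y hy => ih y hy)
    rw [hev.deriv_eq]
    have hsum : HasDerivAt
        (fun y => ∑ i ∈ Finset.range (n+1), (n.choose i : ℝ) * (F i y * G (n-i) y))
        (∑ i ∈ Finset.range (n+1), (n.choose i : ℝ)
          * (F (i+1) x * G (n-i) x + F i x * G (n-i+1) x)) x := by
      apply HasDerivAt.fun_sum
      intro i hi
      exact ((hF i x hx).mul (hG (n-i) x hx)).const_mul _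
    rw [hsum.deriv]
    exact pascal_sum (fun i => F i x) (fun k => G k x) n

lemma g_eq (ℓ : ℕ) {y : ℝ} (hy : y ∈ s) : g ℓ y = M ℓ 0 y * H 0 y := by
  obtain ⟨h1, h2⟩ := hy
  have hy1 : (0:ℝ) < y + 2 := by linarith
  have hy2 : (0:ℝ) < 6 - 5*y := by linarith
  have hsq : Real.sqrt ((y + 2) * (6 - 5 * y) ^ 3)
      = (y+2) ^ ((1:ℝ)/2) * (6-5*y) ^ ((3:ℝ)/2) := by
    rw [Real.sqrt_mul hy1.le, Real.sqrt_eq_rpow, Real.sqrt_eq_rpow,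
      ← Real.rpow_natCast (6-5*y) 3, ← Real.rpow_mul hy2.le]
    norm_num
  simp only [g, M, H, P, Q, A, B, hsq, zero_add, Finset.sum_range_one, Nat.descFactorial_zero,
    Nat.choose_self, Nat.cast_zero, Nat.cast_one, Nat.sub_zero, sub_zero, pow_zero]
  rw [Real.rpow_neg hy1.le, Real.rpow_neg hy2.le]
  have n1 : (y+2) ^ ((1:ℝ)/2) ≠ 0 := (Real.rpow_pos_of_pos hy1 _).ne'
  have n2 : (6-5*y) ^ ((3:ℝ)/2) ≠ 0 := (Real.rpow_pos_of_pos hy2 _).ne'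
  field_simp

lemma master (ℓ n : ℕ) :
    iteratedDeriv n (g ℓ) 1
      = ∑ i ∈ Finset.range (n+1), (n.choose i : ℝ) * (M ℓ i 1 * H (n-i) 1) := by
  have h1 : (1:ℝ) ∈ s := by constructor <;> norm_num
  have heq : (g ℓ) =ᶠ[nhds (1:ℝ)] fun y => M ℓ 0 y * H 0 y :=
    Filter.eventuallyEq_of_mem (hs.mem_nhds h1) (fun y hy => g_eq ℓ hy)
  rw [heq.iteratedDeriv_eq n]
  exact leibniz (M ℓ) H (fun n x _ => hM ℓ n x) (fun n x hx => hH n hx) n 1 h1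

noncomputable def t (j i : ℕ) : ℝ :=
  (j.choose i : ℝ) * A i * B (j-i) * 5^(j-i) * ((3:ℝ)^i)⁻¹

noncomputable def D (j : ℕ) : ℝ := ∑ i ∈ Finset.range (j+1), (-1)^i * t j i

def Aq : ℕ → ℚ
  | 0 => 1
  | (i+1) => Aq i * (i + 1/2)

def Bq : ℕ → ℚ
  | 0 => 1
  | (k+1) => Bq k * (k + 3/2)

def Dq (j : ℕ) : ℚ := ∑ i ∈ Finset.range (j+1),
  (-1)^i * ((j.choose i : ℚ) * Aq i * Bq (j-i) * 5^(j-i) * ((3:ℚ)^i)⁻¹)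

lemma A_eq (i : ℕ) : A i = (Aq i : ℝ) := by
  induction i with
  | zero => simp [A, Aq]
  | succ i ih => rw [show A (i+1) = A i * (i + 1/2) from rfl,
      show Aq (i+1) = Aq i * (i + 1/2) from rfl, ih]; push_cast; ring

lemma B_eq (k : ℕ) : B k = (Bq k : ℝ) := by
  induction k with
  | zero => simp [B, Bq]
  | succ k ih => rw [show B (k+1) = B k * (k + 3/2) from rfl,
      show Bq (k+1) = Bq k * (k + 3/2) from rfl, ih]; push_cast; ring

lemma D_eq (j : ℕ) : D j = (Dq j : ℝ) := by
  rw [D, Dq, Rat.cast_sum]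
  refine Finset.sum_congr rfl fun i hi => ?_
  rw [t, A_eq, B_eq]
  push_cast
  ring

lemma A_nonneg (i : ℕ) : 0 ≤ A i := by
  induction i with
  | zero => norm_num [A]
  | succ i ih => rw [show A (i+1) = A i * (i + 1/2) from rfl]; positivity

lemma B_nonneg (k : ℕ) : 0 ≤ B k := by
  induction k with
  | zero => norm_num [B]
  | succ k ih => rw [show B (k+1) = B k * (k + 3/2) from rfl]; positivity

lemma t_nonneg (j i : ℕ) : 0 ≤ t j i := by
  rw [t]
  have := A_nonneg i
  have := B_nonneg (j-i)
  positivity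

lemma t_succ_le (j k : ℕ) : t j (k+1) ≤ t j k := by
  rcases le_or_gt j k with h | h
  · have h0 : j.choose (k+1) = 0 := Nat.choose_eq_zero_of_lt (by omega)
    rw [show t j (k+1) = 0 by simp [t, h0]]
    exact t_nonneg j k
  · set m := j - (k+1) with hmdef
    have hc : (j.choose (k+1) : ℝ) * ((k:ℝ)+1) = (j.choose k : ℝ) * ((m:ℝ)+1) := by
      have h0 := Nat.choose_succ_right_eq j k
      rw [show j - k = m + 1 by omega] at h0
      exact_mod_cast h0
    have hkpos : (0:ℝ) < (k:ℝ)+1 := by positivity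
    rw [← mul_le_mul_iff_of_pos_left hkpos]
    have e1 : ((k:ℝ)+1) * t j (k+1)
        = ((j.choose k : ℝ) * A k * B m * 5^m * ((3:ℝ)^k)⁻¹)
          * (((m:ℝ)+1) * ((k:ℝ)+1/2) / 3) := by
      rw [t, ← hmdef, show A (k+1) = A k * ((k:ℝ)+1/2) from rfl, pow_succ, mul_inv]
      linear_combination (A k * ((k:ℝ)+1/2) * B m * 5^m * ((3:ℝ)^k)⁻¹ * (3:ℝ)⁻¹) * hc
    have e2 : ((k:ℝ)+1) * t j k
        = ((j.choose k : ℝ) * A k * B m * 5^m * ((3:ℝ)^k)⁻¹)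
          * (((k:ℝ)+1) * (5 * (((m:ℝ)+3/2)))) := by
      rw [t, show j - k = m + 1 by omega, show B (m+1) = B m * ((m:ℝ)+3/2) from rfl, pow_succ]
      ring
    rw [e1, e2]
    have hR : 0 ≤ (j.choose k : ℝ) * A k * B m * 5^m * ((3:ℝ)^k)⁻¹ := by
      have := A_nonneg k
      have := B_nonneg m
      positivity
    refine mul_le_mul_of_nonneg_left ?_ hR
    have hk0 : (0:ℝ) ≤ (k:ℝ) := Nat.cast_nonneg k
    have hm0 : (0:ℝ) ≤ (m:ℝ) := Nat.cast_nonneg m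
    nlinarith

lemma alt_nonneg (u : ℕ → ℝ) (h0 : ∀ k, 0 ≤ u k) (hmono : ∀ k, u (k+1) ≤ u k) (n : ℕ) :
    0 ≤ ∑ i ∈ Finset.range n, (-1:ℝ)^i * u i := by
  have even_case : ∀ m, 0 ≤ ∑ i ∈ Finset.range (2*m), (-1:ℝ)^i * u i := by
    intro m
    induction m with
    | zero => simp
    | succ m ih =>
      rw [show 2*(m+1) = (2*m)+1+1 by ring, Finset.sum_range_succ, Finset.sum_range_succ]
      have h1 : ((-1:ℝ))^(2*m) = 1 := by simp [pow_mul]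
      have h2 : ((-1:ℝ))^(2*m+1) = -1 := by rw [pow_succ, h1]; ring
      rw [h1, h2]
      have := hmono (2*m)
      nlinarith
  rcases Nat.even_or_odd n with ⟨m, hm⟩ | ⟨m, hm⟩
  · rw [show n = 2*m by omega]
    exact even_case m
  · rw [show n = 2*m+1 by omega, Finset.sum_range_succ]
    have h1 : ((-1:ℝ))^(2*m) = 1 := by simp [pow_mul]
    rw [h1]
    have := even_case m
    have := h0 (2*m)
    nlinarith

lemma D_nonneg (j : ℕ) : 0 ≤ D j :=
  alt_nonneg (t j) (t_nonneg j) (t_succ_le j) (j+1)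

lemma D_zero : D 0 = 1 := by
  simp [D, t, A, B]

lemma key3 (i : ℕ) : (3:ℝ) ^ (-(1/2) - (i:ℝ)) * Real.sqrt 3 = ((3:ℝ)^i)⁻¹ := by
  rw [Real.sqrt_eq_rpow, ← Real.rpow_add (by norm_num : (0:ℝ) < 3),
    show (-(1/2) - (i:ℝ) + 1/2 : ℝ) = -(i:ℝ) by ring,
    Real.rpow_neg (by norm_num : (0:ℝ) ≤ 3), Real.rpow_natCast]

lemma P_one (i : ℕ) : P i 1 = (-1)^i * A i * (3:ℝ) ^ (-(1/2) - (i:ℝ)) := by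
  norm_num [P]

lemma Q_one (k : ℕ) : Q k 1 = Real.sqrt 3 * 5^k * B k := by
  have : (6 - 5 * (1:ℝ)) = 1 := by norm_num
  rw [Q, this, Real.one_rpow, mul_one]

lemma H_one (j : ℕ) : H j 1 = D j := by
  rw [H, D]
  refine Finset.sum_congr rfl fun i hi => ?_
  rw [P_one, Q_one, t,
    show (j.choose i : ℝ) * ((-1)^i * A i * (3:ℝ)^(-(1/2) - (i:ℝ))
        * (Real.sqrt 3 * 5^(j-i) * B (j-i)))
      = (-1)^i * ((j.choose i : ℝ) * A i * B (j-i) * 5^(j-i)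
        * ((3:ℝ)^(-(1/2) - (i:ℝ)) * Real.sqrt 3)) by ring,
    key3]

end XiAux

/-- `ξ_ℓ` is rational and at least `12⁻ℓ`; in particular it is positive. -/
theorem xi_rational_and_positive (ℓ : ℕ) (hℓ : 2 ≤ ℓ) :
    (∃ q : ℚ, xi ℓ = (q : ℝ)) ∧ (12 : ℝ)⁻¹ ^ ℓ ≤ xi ℓ ∧ 0 < xi ℓ := by
  have hM1 : ∀ i, XiAux.M ℓ i 1 = (ℓ.descFactorial i : ℝ) := fun i => by simp [XiAux.M]
  have hsum : iteratedDeriv (ℓ-1) (g ℓ) 1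
      = ∑ i ∈ Finset.range (ℓ-1+1), ((ℓ-1).choose i : ℝ)
          * ((ℓ.descFactorial i : ℝ) * XiAux.D (ℓ-1-i)) := by
    rw [XiAux.master ℓ (ℓ-1)]
    exact Finset.sum_congr rfl fun i hi => by rw [hM1, XiAux.H_one]
  have hdesc : ℓ.descFactorial (ℓ-1) = ℓ ! := by
    have h1 := Nat.descFactorial_succ ℓ (ℓ-1)
    rw [show (ℓ-1)+1 = ℓ by omega, Nat.descFactorial_self,
      show ℓ-(ℓ-1) = 1 by omega, one_mul] at h1
    exact h1.symm
  have hterm_le : (ℓ ! : ℝ) ≤ iteratedDeriv (ℓ-1) (g ℓ) 1 := by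
    rw [hsum]
    have hle := Finset.single_le_sum (f := fun i => ((ℓ-1).choose i : ℝ)
        * ((ℓ.descFactorial i : ℝ) * XiAux.D (ℓ-1-i)))
      (fun i _ => by
        have := XiAux.D_nonneg (ℓ-1-i)
        positivity)
      (Finset.self_mem_range_succ (ℓ-1))
    calc (ℓ ! : ℝ) = ((ℓ-1).choose (ℓ-1) : ℝ)
          * ((ℓ.descFactorial (ℓ-1) : ℝ) * XiAux.D (ℓ-1-(ℓ-1))) := by
          rw [Nat.choose_self, Nat.sub_self, XiAux.D_zero, hdesc]; push_cast; ring
      _ ≤ _ := hle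
  have hfacpos : (0:ℝ) < ((ℓ-1)! : ℝ) := by exact_mod_cast Nat.factorial_pos (ℓ-1)
  have h12pos : (0:ℝ) < (12:ℝ)^ℓ := by positivity
  have hfac : (ℓ ! : ℝ) = (ℓ:ℝ) * ((ℓ-1)! : ℝ) := by
    exact_mod_cast (Nat.mul_factorial_pred (show ℓ ≠ 0 by omega)).symm
  have hbound : (12 : ℝ)⁻¹ ^ ℓ ≤ xi ℓ := by
    rw [xi]
    have hstep : 1/((12:ℝ)^ℓ * ((ℓ-1)! : ℝ)) * (ℓ ! : ℝ)
        ≤ 1/((12:ℝ)^ℓ * ((ℓ-1)! : ℝ)) * iteratedDeriv (ℓ-1) (g ℓ) 1 :=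
      mul_le_mul_of_nonneg_left hterm_le (by positivity)
    refine le_trans ?_ hstep
    have he : 1/((12:ℝ)^ℓ * ((ℓ-1)! : ℝ)) * (ℓ ! : ℝ) = (ℓ:ℝ)/(12:ℝ)^ℓ := by
      rw [hfac]
      field_simp
    rw [he, inv_pow, inv_eq_one_div]
    gcongr
    exact_mod_cast show 1 ≤ ℓ by omega
  refine ⟨?_, hbound, lt_of_lt_of_le (by positivity) hbound⟩
  refine ⟨1 / ((12:ℚ)^ℓ * ((ℓ-1)! : ℚ)) * ∑ i ∈ Finset.range (ℓ-1+1),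
    ((ℓ-1).choose i : ℚ) * ((ℓ.descFactorial i : ℚ) * XiAux.Dq (ℓ-1-i)), ?_⟩
  rw [xi, hsum]
  push_cast [XiAux.D_eq]
  ring
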